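/- Fix A > 0 and n ≥ 1, and let y₀ = α_n ∑_{i=1}^n e_i, where e_i is the i-th standard unit sequence. Then for every real square-summable sequence u with u_i = 0 for all i ≤ n, one has f(y₀ + u) ≥ V(√(f(u)/2)), where V : [0,∞) → [0,∞) is defined by V(x) = nα_n² + (2/(1+√(1+A)))x² + √( (n² + An)α_n⁴ + (4nα_n²/(1+√(1+A)))x² + (4(1+A)/(1+√(1+A))²)x⁴ ). -/

import Mathlib

/-- `f(x) = ‖x‖₂² + √(‖x‖₂⁴ + A‖x‖₄⁴)` for a real sequence `x`. -/
noncomputable def orliczF (A : ℝ) (x : ℕ → ℝ) : ℝ :=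
  (∑' i, (x i) ^ 2) + Real.sqrt ((∑' i, (x i) ^ 2) ^ 2 + A * ∑' i, (x i) ^ 4)

/-- `α_n = √((1+√(1+A)) / (n+√(n²+An)))`. -/
noncomputable def alphaN (A : ℝ) (n : ℕ) : ℝ :=
  Real.sqrt ((1 + Real.sqrt (1 + A)) / (n + Real.sqrt ((n : ℝ) ^ 2 + A * n)))

/-- The lower-bound function `V` from the KKT minimization. -/
noncomputable def Vfun (A : ℝ) (n : ℕ) (x : ℝ) : ℝ :=
  n * alphaN A n ^ 2 + (2 / (1 + Real.sqrt (1 + A))) * x ^ 2 +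
    Real.sqrt (((n : ℝ) ^ 2 + A * n) * alphaN A n ^ 4 +
      (4 * n * alphaN A n ^ 2 / (1 + Real.sqrt (1 + A))) * x ^ 2 +
      (4 * (1 + A) / (1 + Real.sqrt (1 + A)) ^ 2) * x ^ 4)

private lemma pb_identity (A c t b β nn : ℝ) (hc0 : c ≠ 0) (hc1 : (c - 1) ^ 2 = 1 + A)
    (hbe : b * c = 2 * t) :
    (nn ^ 2 + A * nn) * β ^ 2 + 4 * nn * β / c * t + 4 * (1 + A) / c ^ 2 * t ^ 2
      = (nn * β + b) ^ 2 + A * nn * β ^ 2 + 4 * t ^ 2 - 4 * t * b := by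
  have ht : t = b * c / 2 := by linarith
  subst ht
  field_simp
  linear_combination (-4*b^2) * hc1

private lemma final_ineq (x y sa sb q : ℝ) (hxy : y ≤ x) (ha : 0 ≤ sa) (hb : 0 ≤ sb)
    (h1 : q / 2 - x ≤ sa) (h2 : q / 2 - y ≤ sb)
    (hdiff : sa ^ 2 - sb ^ 2 = (x - y) * (x + y - q)) :
    y + sb ≤ x + sa := by
  have hkey : 0 ≤ (sa + sb) * ((sa + x) - (sb + y)) := by
    nlinarith [mul_nonneg (sub_nonneg.2 hxy) (sub_nonneg.2 h1),
      mul_nonneg (sub_nonneg.2 hxy) (sub_nonneg.2 h2)]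
  rcases (add_nonneg ha hb).eq_or_lt with h | h
  · have hsa0 : sa = 0 := by nlinarith [sq_nonneg sa, sq_nonneg sb]
    have hsb0 : sb = 0 := by linarith
    linarith
  · nlinarith [hkey, h]

private lemma sqrt_ge_of_sq_le {p q : ℝ} (h : q ^ 2 ≤ p) : q ≤ Real.sqrt p :=
  calc q ≤ |q| := le_abs_self q
    _ = Real.sqrt (q ^ 2) := (Real.sqrt_sq_eq_abs q).symm
    _ ≤ Real.sqrt p := Real.sqrt_le_sqrt h

set_option maxHeartbeats 1000000 in
theorem orlicz_kkt_lower_bound (A : ℝ) (hA : 0 < A) (n : ℕ) (hn : 1 ≤ n)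
    (u : ℕ → ℝ) (hu : Summable fun i => (u i) ^ 2) (hsupp : ∀ i ≤ n, u i = 0) :
    Vfun A n (Real.sqrt (orliczF A u / 2))
      ≤ orliczF A (fun i => (if 1 ≤ i ∧ i ≤ n then alphaN A n else 0) + u i) := by
  set α := alphaN A n with hαdef
  set c := 1 + Real.sqrt (1 + A) with hcdef
  have hs1A : (1 : ℝ) ≤ Real.sqrt (1 + A) := by
    have h := Real.sqrt_le_sqrt (show (1:ℝ) ≤ 1 + A by linarith)
    simpa using h
  have hcpos : 0 < c := by rw [hcdef]; linarith
  have hc0 : c ≠ 0 := ne_of_gt hcpos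
  have hc1 : (c - 1) ^ 2 = 1 + A := by
    rw [hcdef]
    have : (1 + Real.sqrt (1 + A) - 1) = Real.sqrt (1 + A) := by ring
    rw [this, Real.sq_sqrt (by linarith : (0:ℝ) ≤ 1 + A)]
  set S2 := ∑' i, u i ^ 2 with hS2def
  set S4 := ∑' i, u i ^ 4 with hS4def
  have hS2nn : 0 ≤ S2 := tsum_nonneg fun i => sq_nonneg _
  have hterm : ∀ i, u i ^ 2 ≤ S2 := fun i => Summable.le_tsum hu i fun j _ => sq_nonneg _
  have hbd : ∀ i, u i ^ 4 ≤ u i ^ 2 * S2 := by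
    intro i
    have h1 := hterm i
    nlinarith [sq_nonneg (u i)]
  have hu4 : Summable fun i => u i ^ 4 :=
    Summable.of_nonneg_of_le (fun i => by positivity) hbd (hu.mul_right S2)
  have hS4nn : 0 ≤ S4 := tsum_nonneg fun i => by positivity
  have hS4le : S4 ≤ S2 ^ 2 := by
    have := Summable.tsum_le_tsum hbd hu4 (hu.mul_right S2)
    rwa [tsum_mul_right, ← hS2def, ← sq] at this
  set w := Real.sqrt (S2 ^ 2 + A * S4) with hwdef
  have hwnn : 0 ≤ w := Real.sqrt_nonneg _
  have hwsq : w ^ 2 = S2 ^ 2 + A * S4 := Real.sq_sqrt (by positivity)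
  have hwle : w ≤ (c - 1) * S2 := by
    have h1 : w ≤ Real.sqrt ((1 + A) * S2 ^ 2) := by
      apply Real.sqrt_le_sqrt
      have h3 := mul_le_mul_of_nonneg_left hS4le hA.le
      linarith
    have h2 : Real.sqrt ((1 + A) * S2 ^ 2) = (c - 1) * S2 := by
      rw [Real.sqrt_mul (by linarith) , Real.sqrt_sq hS2nn, hcdef]
      ring
    linarith [h1, h2.le]
  set t := (S2 + w) / 2 with htdef
  have htnn : 0 ≤ t := by rw [htdef]; linarith
  have horl : orliczF A u = 2 * t := by
    rw [orliczF, ← hS2def, ← hS4def, ← hwdef, htdef]; ring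
  set β := α ^ 2 with hβdef
  have hβnn : 0 ≤ β := sq_nonneg _
  have hnn : (0:ℝ) ≤ n := Nat.cast_nonneg n
  -- the tsum computations
  have hconst2 : (∑' i, (if 1 ≤ i ∧ i ≤ n then α else 0) ^ 2) = n * β := by
    have hz : ∀ i ∉ Finset.Icc 1 n, (if 1 ≤ i ∧ i ≤ n then α else 0) ^ 2 = 0 := by
      intro i hi
      rw [if_neg (by simpa [Finset.mem_Icc] using hi)]
      ring
    rw [tsum_eq_sum hz]
    have : ∀ i ∈ Finset.Icc 1 n, (if 1 ≤ i ∧ i ≤ n then α else 0) ^ 2 = β := by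
      intro i hi
      rw [if_pos (by simpa [Finset.mem_Icc] using hi), hβdef]
    rw [Finset.sum_congr rfl this, Finset.sum_const, Nat.card_Icc]
    simp [nsmul_eq_mul]
  have hconst4 : (∑' i, (if 1 ≤ i ∧ i ≤ n then α else 0) ^ 4) = n * β ^ 2 := by
    have hz : ∀ i ∉ Finset.Icc 1 n, (if 1 ≤ i ∧ i ≤ n then α else 0) ^ 4 = 0 := by
      intro i hi
      rw [if_neg (by simpa [Finset.mem_Icc] using hi)]
      ring
    rw [tsum_eq_sum hz]
    have : ∀ i ∈ Finset.Icc 1 n, (if 1 ≤ i ∧ i ≤ n then α else 0) ^ 4 = β ^ 2 := by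
      intro i hi
      rw [if_pos (by simpa [Finset.mem_Icc] using hi), hβdef]
      ring
    rw [Finset.sum_congr rfl this, Finset.sum_const, Nat.card_Icc]
    simp [nsmul_eq_mul]
  have hsum2 : Summable (fun i => (if 1 ≤ i ∧ i ≤ n then α else 0) ^ 2) :=
    summable_of_ne_finset_zero (s := Finset.Icc 1 n) (fun i hi => by
      rw [if_neg (by simpa [Finset.mem_Icc] using hi)]; ring)
  have hsum4 : Summable (fun i => (if 1 ≤ i ∧ i ≤ n then α else 0) ^ 4) :=
    summable_of_ne_finset_zero (s := Finset.Icc 1 n) (fun i hi => by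
      rw [if_neg (by simpa [Finset.mem_Icc] using hi)]; ring)
  have hpt2 : ∀ i, ((if 1 ≤ i ∧ i ≤ n then α else 0) + u i) ^ 2
      = (if 1 ≤ i ∧ i ≤ n then α else 0) ^ 2 + u i ^ 2 := by
    intro i
    by_cases h : 1 ≤ i ∧ i ≤ n
    · rw [hsupp i h.2]; ring
    · rw [if_neg h]; ring
  have hpt4 : ∀ i, ((if 1 ≤ i ∧ i ≤ n then α else 0) + u i) ^ 4
      = (if 1 ≤ i ∧ i ≤ n then α else 0) ^ 4 + u i ^ 4 := by
    intro i
    by_cases h : 1 ≤ i ∧ i ≤ n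
    · rw [hsupp i h.2]; ring
    · rw [if_neg h]; ring
  have key2 : (∑' i, ((if 1 ≤ i ∧ i ≤ n then α else 0) + u i) ^ 2) = n * β + S2 := by
    rw [tsum_congr hpt2, Summable.tsum_add hsum2 hu, hconst2, hS2def]
  have key4 : (∑' i, ((if 1 ≤ i ∧ i ≤ n then α else 0) + u i) ^ 4) = n * β ^ 2 + S4 := by
    rw [tsum_congr hpt4, Summable.tsum_add hsum4 hu4, hconst4, hS4def]
  -- rewrite the goal
  have hgoal : orliczF A (fun i => (if 1 ≤ i ∧ i ≤ n then α else 0) + u i)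
      = n * β + S2 + Real.sqrt ((n * β + S2) ^ 2 + A * (n * β ^ 2 + S4)) := by
    simp only [orliczF]
    rw [key2, key4]
  rw [hgoal]
  have hx2 : Real.sqrt (orliczF A u / 2) ^ 2 = t := by
    rw [horl]
    rw [Real.sq_sqrt (by linarith : (0:ℝ) ≤ 2 * t / 2)]
    ring
  have hx4 : Real.sqrt (orliczF A u / 2) ^ 4 = t ^ 2 := by
    rw [show ∀ y : ℝ, y ^ 4 = (y ^ 2) ^ 2 from fun y => by ring, hx2]
  rw [Vfun, ← hαdef, ← hcdef, hx2, hx4, ← hβdef,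
    show α ^ 4 = β ^ 2 by rw [hβdef]; ring]
  -- now a scalar inequality
  set b := 2 * t / c with hbdef
  have hbnn : 0 ≤ b := by positivity
  have hbe : b * c = 2 * t := by rw [hbdef]; field_simp
  have hba : b ≤ S2 := by
    rw [hbdef, div_le_iff₀ hcpos]
    have h2t : 2 * t = S2 + w := by rw [htdef]; ring
    linarith [hwle]
  set Pa := (n * β + S2) ^ 2 + A * (n * β ^ 2 + S4) with hPadef
  set Pb := ((n:ℝ) ^ 2 + A * n) * β ^ 2 + 4 * ↑n * β / c * t + 4 * (1 + A) / c ^ 2 * t ^ 2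
    with hPbdef
  have hPann : 0 ≤ Pa := by
    apply add_nonneg (sq_nonneg _)
    exact mul_nonneg hA.le (add_nonneg (mul_nonneg hnn (sq_nonneg _)) hS4nn)
  have hPaeq : Pa = (n * β + S2) ^ 2 + A * n * β ^ 2 + 4 * t ^ 2 - 4 * t * S2 := by
    have hw2t : w = 2 * t - S2 := by rw [htdef]; ring
    have hAS4 : A * S4 = 4 * t ^ 2 - 4 * t * S2 := by
      have h := hwsq
      rw [hw2t] at h
      linear_combination (-1) * h
    rw [hPadef]
    linear_combination hAS4
  have hPbeq : Pb = (n * β + b) ^ 2 + A * n * β ^ 2 + 4 * t ^ 2 - 4 * t * b := by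
    rw [hPbdef]
    exact pb_identity A c t b β (n : ℝ) hc0 hc1 hbe
  have hPbnn : 0 ≤ Pb := by
    rw [hPbdef]
    have h1 : (0:ℝ) ≤ ((n:ℝ) ^ 2 + A * n) * β ^ 2 :=
      mul_nonneg (by positivity) (sq_nonneg _)
    have h2 : (0:ℝ) ≤ 4 * ↑n * β / c * t :=
      mul_nonneg (div_nonneg (by positivity) hcpos.le) htnn
    have h3 : (0:ℝ) ≤ 4 * (1 + A) / c ^ 2 * t ^ 2 :=
      mul_nonneg (by positivity) (sq_nonneg _)
    linarith
  set sa := Real.sqrt Pa with hsadef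
  set sb := Real.sqrt Pb with hsbdef
  have hsann : 0 ≤ sa := Real.sqrt_nonneg _
  have hsbnn : 0 ≤ sb := Real.sqrt_nonneg _
  have hsasq : sa ^ 2 = Pa := Real.sq_sqrt hPann
  have hsbsq : sb ^ 2 = Pb := Real.sq_sqrt hPbnn
  have hprod1 : 0 ≤ t * (↑n * β) := mul_nonneg htnn (mul_nonneg hnn hβnn)
  have hprod2 : 0 ≤ A * (↑n * β ^ 2) := mul_nonneg hA.le (mul_nonneg hnn (sq_nonneg β))
  have hsalb : 2 * t - S2 - n * β ≤ sa := by
    apply sqrt_ge_of_sq_le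
    rw [hPaeq, show (↑n * β + S2) ^ 2 + A * ↑n * β ^ 2 + 4 * t ^ 2 - 4 * t * S2
      = (2 * t - S2 - ↑n * β) ^ 2 + A * (↑n * β ^ 2) + 4 * (t * (↑n * β)) by ring]
    linarith
  have hsblb : 2 * t - b - n * β ≤ sb := by
    apply sqrt_ge_of_sq_le
    rw [hPbeq, show (↑n * β + b) ^ 2 + A * ↑n * β ^ 2 + 4 * t ^ 2 - 4 * t * b
      = (2 * t - b - ↑n * β) ^ 2 + A * (↑n * β ^ 2) + 4 * (t * (↑n * β)) by ring]
    linarith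
  -- final inequality : n*β + (2/c)*t + sb ≤ n*β + S2 + sa
  have h2ct : 2 / c * t = b := by rw [hbdef]; ring
  rw [h2ct]
  have hsa2 : sa ^ 2 = (n * β + S2) ^ 2 + A * n * β ^ 2 + 4 * t ^ 2 - 4 * t * S2 := by
    rw [hsasq, hPaeq]
  have hsb2 : sb ^ 2 = (n * β + b) ^ 2 + A * n * β ^ 2 + 4 * t ^ 2 - 4 * t * b := by
    rw [hsbsq, hPbeq]
  have hfin : b + sb ≤ S2 + sa := by
    apply final_ineq S2 b sa sb (4 * t - 2 * (n * β)) hba hsann hsbnn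
    · linarith
    · linarith
    · linear_combination hsa2 - hsb2
  linarith
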